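/- Let A be a k·m × k·m complex matrix written in k×k blocks A_{i,j} of size m×m. Then A is doubly Toeplitz (block Toeplitz with each block a Toeplitz matrix) if and only if: (1) Aᵀ = J A J, (2) A₁ᵀ = J₁ A₁ J₁, and (3) A₂ᵀ = J₁ A₂ J₁; where A₁ is obtained from A by deleting the last block row and last block column, A₂ is obtained from A by removing the last row and last column of each block A_{i,j}, and J, J₁ are the exchange (antidiagonal ones) matrices of the appropriate sizes. -/

import Mathlib

open Matrix

/-- The exchange matrix on a product index (block lexicographical ordering):
ones on the antidiagonal of the full `k*m × k*m` matrix, zeros elsewhere. -/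
noncomputable def exchProd (k m : ℕ) : Matrix (Fin k × Fin m) (Fin k × Fin m) ℂ :=
  Matrix.of fun p q =>
    if (p.1 : ℕ) + (q.1 : ℕ) = k - 1 ∧ (p.2 : ℕ) + (q.2 : ℕ) = m - 1 then 1 else 0

/-- product reversal -/
def revP {k m : ℕ} (p : Fin k × Fin m) : Fin k × Fin m := (p.1.rev, p.2.rev)

lemma revP_revP {k m : ℕ} (p : Fin k × Fin m) : revP (revP p) = p := by
  simp [revP, Fin.rev_rev]

lemma exchProd_apply {k m : ℕ} (p q : Fin k × Fin m) :
    exchProd k m p q = if q = revP p then 1 else 0 := by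
  obtain ⟨⟨i, hi⟩, ⟨a, ha⟩⟩ := p
  obtain ⟨⟨j, hj⟩, ⟨b, hb⟩⟩ := q
  simp only [exchProd, Matrix.of_apply, revP, Prod.ext_iff, Fin.ext_iff, Fin.val_rev]
  congr 1
  simp only [eq_iff_iff]
  constructor <;> intro h <;> omega

lemma exch_mul_apply {k m : ℕ} (A : Matrix (Fin k × Fin m) (Fin k × Fin m) ℂ)
    (p q : Fin k × Fin m) : (exchProd k m * A) p q = A (revP p) q := by
  rw [Matrix.mul_apply]
  rw [Finset.sum_eq_single (revP p)]
  · rw [exchProd_apply]; simp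
  · intro r _ hr
    rw [exchProd_apply]
    simp [hr]
  · simp

lemma mul_exch_apply {k m : ℕ} (A : Matrix (Fin k × Fin m) (Fin k × Fin m) ℂ)
    (p q : Fin k × Fin m) : (A * exchProd k m) p q = A p (revP q) := by
  rw [Matrix.mul_apply]
  rw [Finset.sum_eq_single (revP q)]
  · rw [exchProd_apply, revP_revP]; simp
  · intro r _ hr
    rw [exchProd_apply]
    have : q ≠ revP r := by
      intro h; apply hr; rw [h, revP_revP]
    simp [this]
  · simp

/-- persymmetry condition, entrywise -/
lemma persym_iff {k m : ℕ} (A : Matrix (Fin k × Fin m) (Fin k × Fin m) ℂ) :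
    Aᵀ = exchProd k m * A * exchProd k m ↔ ∀ p q, A q p = A (revP p) (revP q) := by
  constructor
  · intro h p q
    have := congrFun (congrFun h p) q
    rwa [Matrix.transpose_apply, mul_exch_apply, exch_mul_apply] at this
  · intro h
    ext p q
    rw [Matrix.transpose_apply, mul_exch_apply, exch_mul_apply]
    exact h p q

/-- one-dimensional shift-invariance implies Toeplitz -/
lemma shift_toeplitz {α : Type*} {n : ℕ} (f : Fin (n + 1) → Fin (n + 1) → α)
    (h : ∀ i j : Fin n, f i.castSucc j.castSucc = f i.succ j.succ) :
    ∀ i j i' j' : Fin (n + 1), (i : ℤ) - (j : ℤ) = (i' : ℤ) - (j' : ℤ) → f i j = f i' j' := by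
  have key : ∀ (t : ℕ) (i j i' j' : Fin (n + 1)), (i' : ℕ) = i + t → (j' : ℕ) = j + t →
      f i j = f i' j' := by
    intro t
    induction t with
    | zero => intro i j i' j' h1 h2
              have : i' = i := Fin.ext (by omega)
              have : j' = j := Fin.ext (by omega)
              subst this; congr 1; exact Fin.ext (by omega)
    | succ t ih =>
        intro i j i' j' h1 h2
        have hi : (i : ℕ) + t < n := by omega
        have hj : (j : ℕ) + t < n := by omega
        have step := h ⟨(i : ℕ) + t, hi⟩ ⟨(j : ℕ) + t, hj⟩
        have e1 : f i j = f (Fin.castSucc ⟨(i : ℕ) + t, hi⟩) (Fin.castSucc ⟨(j : ℕ) + t, hj⟩) :=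
          ih i j _ _ (by simp) (by simp)
        have e2 : i' = Fin.succ ⟨(i : ℕ) + t, hi⟩ := Fin.ext (by simp; omega)
        have e3 : j' = Fin.succ ⟨(j : ℕ) + t, hj⟩ := Fin.ext (by simp; omega)
        rw [e1, step, e2, e3]
  intro i j i' j' hd
  rcases le_or_gt (i : ℕ) (i' : ℕ) with hle | hlt
  · exact key ((i' : ℕ) - i) i j i' j' (by omega) (by omega)
  · exact (key ((i : ℕ) - i') i' j' i j (by omega) (by omega)).symm

theorem stmt_2 (k m : ℕ)
    (A : Matrix (Fin (k + 1) × Fin (m + 1)) (Fin (k + 1) × Fin (m + 1)) ℂ) :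
    -- A is doubly Toeplitz: the block `A_{i,j}` depends only on `i - j` and each block
    -- is itself Toeplitz (the entry depends only on the difference of inner indices)
    (∀ p q p' q' : Fin (k + 1) × Fin (m + 1),
        (p.1 : ℤ) - (q.1 : ℤ) = (p'.1 : ℤ) - (q'.1 : ℤ) →
        (p.2 : ℤ) - (q.2 : ℤ) = (p'.2 : ℤ) - (q'.2 : ℤ) → A p q = A p' q') ↔
      (Aᵀ = exchProd (k + 1) (m + 1) * A * exchProd (k + 1) (m + 1) ∧
        (A.submatrix (Prod.map Fin.castSucc id) (Prod.map Fin.castSucc id))ᵀ =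
          exchProd k (m + 1) * A.submatrix (Prod.map Fin.castSucc id) (Prod.map Fin.castSucc id) *
            exchProd k (m + 1) ∧
        (A.submatrix (Prod.map id Fin.castSucc) (Prod.map id Fin.castSucc))ᵀ =
          exchProd (k + 1) m * A.submatrix (Prod.map id Fin.castSucc) (Prod.map id Fin.castSucc) *
            exchProd (k + 1) m) := by
  constructor
  · intro hT
    refine ⟨(persym_iff A).mpr ?_, (persym_iff _).mpr ?_, (persym_iff _).mpr ?_⟩
    · intro p q
      apply hT
      · simp [revP, Fin.val_rev]; omega
      · simp [revP, Fin.val_rev]; omega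
    · intro p q
      simp only [Matrix.submatrix_apply]
      apply hT
      · simp [revP, Prod.map, Fin.val_rev]
      · simp [revP, Prod.map, Fin.val_rev]; omega
    · intro p q
      simp only [Matrix.submatrix_apply]
      apply hT
      · simp [revP, Prod.map, Fin.val_rev]; omega
      · simp [revP, Prod.map, Fin.val_rev]
  · rintro ⟨h1, h2, h3⟩
    rw [persym_iff] at h1 h2 h3
    -- shift invariance in the block index
    have hK : ∀ (i j : Fin k) (a b : Fin (m + 1)),
        A (i.castSucc, a) (j.castSucc, b) = A (i.succ, a) (j.succ, b) := by
      intro i j a b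
      have e1 := h2 (j, b) (i, a)
      simp only [Matrix.submatrix_apply, Prod.map, revP, id] at e1
      -- e1 : A (i.castSucc, a) (j.castSucc, b) = A ((j.rev).castSucc, b.rev) ((i.rev).castSucc, a.rev)
      have e2 := h1 ((i.rev).castSucc, a.rev) ((j.rev).castSucc, b.rev)
      simp only [revP] at e2
      rw [e1, e2, Fin.rev_castSucc, Fin.rev_castSucc, Fin.rev_rev, Fin.rev_rev,
        Fin.rev_rev, Fin.rev_rev]
    have hM : ∀ (i j : Fin (k + 1)) (a b : Fin m),
        A (i, a.castSucc) (j, b.castSucc) = A (i, a.succ) (j, b.succ) := by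
      intro i j a b
      have e1 := h3 (j, b) (i, a)
      simp only [Matrix.submatrix_apply, Prod.map, revP, id] at e1
      have e2 := h1 (i.rev, (a.rev).castSucc) (j.rev, (b.rev).castSucc)
      simp only [revP] at e2
      rw [e1, e2, Fin.rev_castSucc, Fin.rev_castSucc, Fin.rev_rev, Fin.rev_rev,
        Fin.rev_rev, Fin.rev_rev]
    rintro ⟨i, a⟩ ⟨j, b⟩ ⟨i', a'⟩ ⟨j', b'⟩ hd1 hd2
    simp only at hd1 hd2 ⊢
    have step1 : A (i, a) (j, b) = A (i', a) (j', b) :=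
      shift_toeplitz (fun x y => A (x, a) (y, b)) (fun x y => hK x y a b) i j i' j' hd1
    have step2 : A (i', a) (j', b) = A (i', a') (j', b') :=
      shift_toeplitz (fun x y => A (i', x) (j', y)) (fun x y => hM i' j' x y) a b a' b' hd2
    rw [step1, step2]
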